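/- Let γ : H × E → H satisfy the γ-regularity conditions, let M ⊆ H be nonempty and h₀ ∈ M. Suppose there are an open set U ⊆ H with h₀ ∈ U, an integer m ≥ 1, a set V ⊆ ℝ^m_+ open in ℝ^m_+, and a homeomorphism φ : V → U ∩ M which is the restriction of a twice continuously Fréchet differentiable map φ : ℝ^m → H with bounded first and second derivatives, such that φ⁻¹ extends to a continuously Fréchet differentiable map Φ : H → ℝ^m with bounded derivative (so Φ(φ(y)) = y for y ∈ V and φ(Φ(h)) = h for h ∈ U ∩ M). Assume there exist δ₀ > 0 and B₀ ∈ ℰ with F(E ∖ B₀) < ∞ such that for every h ∈ M with ‖h − h₀‖ < δ₀ one has h + γ(h,x) ∈ U ∩ M for F-almost all x ∈ B₀. Then there exist δ > 0, a set B ∈ ℰ with F(E ∖ B) < ∞ and a measurable ρ : E → [0,∞) with ∫_E ρ(x)² F(dx) < ∞ such that for every h ∈ M with ‖h − h₀‖ < δ, writing y := Φ(h), one has ‖γ(h,x) − Dφ(y)(Φ(h + γ(h,x)) − Φ(h))‖ ≤ ρ(x)² for F-almost all x ∈ B. -/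

import Mathlib

open MeasureTheory
open scoped ENNReal


open MeasureTheory

lemma taylor_aux {X Y : Type*} [NormedAddCommGroup X] [NormedSpace ℝ X]
    [NormedAddCommGroup Y] [NormedSpace ℝ Y]
    (φ : X → Y) (hφ : ContDiff ℝ 2 φ) (C : ℝ)
    (hC : ∀ y, ‖fderiv ℝ (fderiv ℝ φ) y‖ ≤ C) (a b : X) :
    ‖φ b - φ a - fderiv ℝ φ a (b - a)‖ ≤ C * ‖b - a‖ ^ 2 := by
  have hC0 : 0 ≤ C := (ContinuousLinearMap.opNorm_nonneg _).trans (hC a)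
  have hg : Differentiable ℝ (fderiv ℝ φ) :=
    (hφ.fderiv_right (m := 1) (by norm_num)).differentiable one_ne_zero
  have hlip : ∀ y : X, ‖fderiv ℝ φ y - fderiv ℝ φ a‖ ≤ C * ‖y - a‖ := fun y =>
    convex_univ.norm_image_sub_le_of_norm_fderiv_le
      (fun z _ => hg z) (fun z _ => hC z)
      (Set.mem_univ a) (Set.mem_univ y)
  set L := fderiv ℝ φ a with hL
  set ψ : X → Y := fun y => φ y - L (y - a) with hψ
  have hψd : ∀ y : X, HasFDerivAt ψ (fderiv ℝ φ y - L) y := by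
    intro y
    have h1 : HasFDerivAt φ (fderiv ℝ φ y) y :=
      ((hφ.differentiable (by norm_num)) y).hasFDerivAt
    have h2 : HasFDerivAt (fun y => L (y - a)) L y := by
      simpa only [map_sub] using (L.hasFDerivAt (x := y)).sub_const (L a)
    exact h1.sub h2
  have hseg : ∀ y ∈ segment ℝ a b, ‖y - a‖ ≤ ‖b - a‖ := by
    intro y hy
    rw [segment_eq_image'] at hy
    obtain ⟨t, ht, rfl⟩ := hy
    simp only [add_sub_cancel_left, norm_smul, Real.norm_eq_abs]
    calc |t| * ‖b - a‖ ≤ 1 * ‖b - a‖ := by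
          apply mul_le_mul_of_nonneg_right _ (norm_nonneg _)
          rw [abs_le]; constructor <;> linarith [ht.1, ht.2]
      _ = ‖b - a‖ := one_mul _
  have hmv : ‖ψ b - ψ a‖ ≤ C * ‖b - a‖ * ‖b - a‖ := by
    refine (convex_segment a b).norm_image_sub_le_of_norm_hasFDerivWithin_le
      (f' := fun y => fderiv ℝ φ y - L)
      (fun y _ => (hψd y).hasFDerivWithinAt) ?_ (left_mem_segment ℝ a b)
      (right_mem_segment ℝ a b)
    intro y hy
    exact (hlip y).trans (mul_le_mul_of_nonneg_left (hseg y hy) hC0)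
  have heq : ψ b - ψ a = φ b - φ a - L (b - a) := by
    simp only [hψ, sub_self, map_zero, sub_zero]
    abel
  rw [heq] at hmv
  calc ‖φ b - φ a - L (b - a)‖ ≤ C * ‖b - a‖ * ‖b - a‖ := hmv
    _ = C * ‖b - a‖ ^ 2 := by ring

theorem stmt_12
    {H E : Type*}
    [NormedAddCommGroup H] [InnerProductSpace ℝ H] [CompleteSpace H]
    [TopologicalSpace.SeparableSpace H] [MeasurableSpace H] [BorelSpace H]
    [MeasurableSpace E] (F : Measure E) [SigmaFinite F]
    (γ : H → E → H) (hγmeas : Measurable (Function.uncurry γ))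
    (ρ : ℕ → E → ℝ)
    (hρmeas : ∀ n, Measurable (ρ n))
    (hρnonneg : ∀ n x, 0 ≤ ρ n x)
    (hρint : ∀ n, Integrable (fun x => ρ n x ^ 2) F)
    (hγLip : ∀ n : ℕ, ∀ x : E, ∀ h₁ h₂ : H, ‖h₁‖ ≤ (n : ℝ) → ‖h₂‖ ≤ (n : ℝ) →
      ‖γ h₁ x - γ h₂ x‖ ≤ ρ n x * ‖h₁ - h₂‖)
    (hγbd : ∀ n : ℕ, ∀ x : E, ∀ h : H, ‖h‖ ≤ (n : ℝ) → ‖γ h x‖ ≤ ρ n x)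
    (M : Set H) (hMne : M.Nonempty) (h₀ : H) (hh₀ : h₀ ∈ M)
    (U : Set H) (hU : IsOpen U) (hh₀U : h₀ ∈ U)
    (m : ℕ) [NeZero m] (hm : 1 ≤ m)
    (V : Set (EuclideanSpace ℝ (Fin m)))
    (hV : ∃ Vt : Set (EuclideanSpace ℝ (Fin m)), IsOpen Vt ∧
      Vt ∩ {y : EuclideanSpace ℝ (Fin m) | 0 ≤ y 0} = V)
    (φ : EuclideanSpace ℝ (Fin m) → H)
    (hφC2 : ContDiff ℝ 2 φ)
    (hφbd1 : ∃ C : ℝ, ∀ y, ‖fderiv ℝ φ y‖ ≤ C)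
    (hφbd2 : ∃ C : ℝ, ∀ y, ‖fderiv ℝ (fderiv ℝ φ) y‖ ≤ C)
    (hφbij : Set.BijOn φ V (U ∩ M))
    (Φ : H → EuclideanSpace ℝ (Fin m))
    (hΦC1 : ContDiff ℝ 1 Φ)
    (hΦbd : ∃ C : ℝ, ∀ h, ‖fderiv ℝ Φ h‖ ≤ C)
    (hΦφ : ∀ y ∈ V, Φ (φ y) = y)
    (hφΦ : ∀ h ∈ U ∩ M, φ (Φ h) = h)
    (δ₀ : ℝ) (hδ₀ : 0 < δ₀)
    (B₀ : Set E) (hB₀ : MeasurableSet B₀) (hB₀fin : F B₀ᶜ < ⊤)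
    (hjump : ∀ h ∈ M, ‖h - h₀‖ < δ₀ → ∀ᵐ x ∂F, x ∈ B₀ → h + γ h x ∈ U ∩ M) :
    ∃ δ : ℝ, 0 < δ ∧ ∃ B : Set E, MeasurableSet B ∧ F Bᶜ < ⊤ ∧
      ∃ ρ' : E → ℝ, Measurable ρ' ∧ (∀ x, 0 ≤ ρ' x) ∧
        Integrable (fun x => ρ' x ^ 2) F ∧
        ∀ h ∈ M, ‖h - h₀‖ < δ →
          ∀ᵐ x ∂F, x ∈ B →
            ‖γ h x - fderiv ℝ φ (Φ h) (Φ (h + γ h x) - Φ h)‖ ≤ ρ' x ^ 2 := by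
  classical
  obtain ⟨C2, hC2⟩ := hφbd2
  obtain ⟨CΦ, hCΦ⟩ := hΦbd
  have hC20 : 0 ≤ C2 := (ContinuousLinearMap.opNorm_nonneg _).trans (hC2 0)
  have hCΦ0 : 0 ≤ CΦ := (norm_nonneg _).trans (hCΦ 0)
  obtain ⟨ε, hε, hball⟩ := Metric.isOpen_iff.1 hU h₀ hh₀U
  set n : ℕ := ⌈‖h₀‖⌉₊ + 1 with hn
  set δ : ℝ := min δ₀ (min ε 1) with hδ
  have hδpos : 0 < δ := lt_min hδ₀ (lt_min hε one_pos)
  have hΦlip : ∀ x y : H, ‖Φ y - Φ x‖ ≤ CΦ * ‖y - x‖ := fun x y =>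
    convex_univ.norm_image_sub_le_of_norm_fderiv_le
      (fun z _ => (hΦC1.differentiable one_ne_zero) z) (fun z _ => hCΦ z)
      (Set.mem_univ x) (Set.mem_univ y)
  set c : ℝ := Real.sqrt (C2 * CΦ ^ 2) with hc
  refine ⟨δ, hδpos, B₀, hB₀, hB₀fin, fun x => c * ρ n x,
    (hρmeas n).const_mul c, fun x => mul_nonneg (Real.sqrt_nonneg _) (hρnonneg n x),
    ?_, ?_⟩
  · have : (fun x => (c * ρ n x) ^ 2) = fun x => c ^ 2 * ρ n x ^ 2 := by
      funext x; ring
    rw [this]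
    exact (hρint n).const_mul _
  · intro h hhM hhδ
    have hδε : δ ≤ ε := le_trans (min_le_right _ _) (min_le_left _ _)
    have hδ1 : δ ≤ 1 := le_trans (min_le_right _ _) (min_le_right _ _)
    have hhU : h ∈ U := by
      apply hball
      rw [Metric.mem_ball, dist_eq_norm]
      exact lt_of_lt_of_le hhδ hδε
    have hhUM : h ∈ U ∩ M := ⟨hhU, hhM⟩
    have hhn : ‖h‖ ≤ (n : ℝ) := by
      have h1 : ‖h‖ ≤ ‖h - h₀‖ + ‖h₀‖ := by
        calc ‖h‖ = ‖h - h₀ + h₀‖ := by rw [sub_add_cancel]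
          _ ≤ ‖h - h₀‖ + ‖h₀‖ := norm_add_le _ _
      have h2 : ‖h - h₀‖ ≤ 1 := le_of_lt (lt_of_lt_of_le hhδ hδ1)
      have h3 : ‖h₀‖ ≤ (⌈‖h₀‖⌉₊ : ℝ) := Nat.le_ceil _
      have : (n : ℝ) = (⌈‖h₀‖⌉₊ : ℝ) + 1 := by rw [hn]; push_cast; ring
      rw [this]; linarith
    filter_upwards [hjump h hhM (lt_of_lt_of_le hhδ (min_le_left _ _))] with x hx hxB
    have hjx : h + γ h x ∈ U ∩ M := hx hxB
    set a := Φ h with ha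
    set b := Φ (h + γ h x) with hb
    have hφa : φ a = h := hφΦ h hhUM
    have hφb : φ b = h + γ h x := hφΦ _ hjx
    have hγeq : γ h x = φ b - φ a := by rw [hφa, hφb]; abel
    have htay := taylor_aux φ hφC2 C2 hC2 a b
    have hba : ‖b - a‖ ≤ CΦ * ρ n x := by
      have := hΦlip h (h + γ h x)
      simp only [add_sub_cancel_left] at this
      exact this.trans (mul_le_mul_of_nonneg_left (hγbd n x h hhn) hCΦ0)
    have hρ0 : 0 ≤ ρ n x := hρnonneg n x
    calc ‖γ h x - (fderiv ℝ φ a) (b - a)‖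
        = ‖φ b - φ a - (fderiv ℝ φ a) (b - a)‖ := by rw [hγeq]
      _ ≤ C2 * ‖b - a‖ ^ 2 := htay
      _ ≤ C2 * (CΦ * ρ n x) ^ 2 := by
          apply mul_le_mul_of_nonneg_left _ hC20
          exact pow_le_pow_left₀ (norm_nonneg _) hba 2
      _ = (c * ρ n x) ^ 2 := by
          rw [hc]
          simp only [mul_pow]
          rw [Real.sq_sqrt (by positivity)]
          ring
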